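/- arXiv:1001.3971 — 3 statements merged into one kernel-verified Lean document; each statement's English description precedes it below -/
import Mathlib

section
/- Ordering of the three quantum informations (Theorem): In the multi-parameter spectral-family setup, for every θ ∈ ℝ^p one has H(θ) ≤ C_L(θ) ≤ C_Υ(θ) in the Loewner order on real symmetric p×p matrices. Moreover, H(θ) = C_L(θ) if and only if ⟨w_j^{(m)}(θ), w_k(θ)⟩ = 0 for all m and all j ≠ k with p_j(θ) > 0 and p_k(θ) > 0; and C_L(θ) = C_Υ(θ) if and only if ⟨w_i^{(m)}(θ), w_i(θ)⟩ = 0 for all m and all i with p_i(θ) > 0. -/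
open scoped BigOperators

noncomputable section

/-- The Hermitian inner product on `Fin d → ℂ`, conjugate-linear in the first argument. -/
def inn {d : ℕ} (x y : Fin d → ℂ) : ℂ := ∑ i, (starRingEnd ℂ) (x i) * y i

lemma inn_comm {d : ℕ} (x y : Fin d → ℂ) : inn y x = (starRingEnd ℂ) (inn x y) := by
  simp only [inn, map_sum, map_mul, Complex.conj_conj]
  exact Finset.sum_congr rfl fun i _ => by ring

lemma psd_key {n : ℕ} {ι : Type*} (S : Finset ι) (c : ι → ℝ) (z : ι → Fin n → ℂ)
    (hc : ∀ i ∈ S, 0 ≤ c i)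
    (M : Matrix (Fin n) (Fin n) ℝ)
    (hM : ∀ k l, M k l = 4 * (∑ i ∈ S, (c i : ℂ) * z i k * (starRingEnd ℂ) (z i l)).re) :
    M.PosSemidef ∧ (M = 0 ↔ ∀ i ∈ S, ∀ m, c i = 0 ∨ z i m = 0) := by
  have hdiag : ∀ m, M m m = 4 * ∑ i ∈ S, c i * Complex.normSq (z i m) := by
    intro m
    rw [hM]
    congr 1
    rw [Complex.re_sum]
    refine Finset.sum_congr rfl fun i _ => ?_
    rw [mul_assoc, Complex.mul_conj, ← Complex.ofReal_mul, Complex.ofReal_re]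
  constructor
  · rw [Matrix.posSemidef_iff_dotProduct_mulVec]
    constructor
    · refine Matrix.IsHermitian.ext fun k l => ?_
      simp only [star_trivial]
      rw [hM, hM]
      congr 1
      rw [← Complex.conj_re (∑ i ∈ S, (c i : ℂ) * z i l * (starRingEnd ℂ) (z i k))]
      congr 1
      rw [map_sum]
      refine Finset.sum_congr rfl fun i _ => ?_
      simp only [map_mul, Complex.conj_conj, Complex.conj_ofReal]
      ring
    · intro x
      simp only [star_trivial]
      have hq : dotProduct x (M.mulVec x)
          = 4 * ∑ i ∈ S, c i * Complex.normSq (∑ k, (x k : ℂ) * z i k) := by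
        have key : (∑ i ∈ S, (c i : ℂ) * (∑ k, (x k : ℂ) * z i k) *
            (starRingEnd ℂ) (∑ k, (x k : ℂ) * z i k))
            = ∑ k, ∑ l, ((x k : ℂ)) * ((x l : ℂ)) *
              (∑ i ∈ S, (c i : ℂ) * z i k * (starRingEnd ℂ) (z i l)) := by
          simp only [map_sum, map_mul, Complex.conj_ofReal, Finset.mul_sum, Finset.sum_mul]
          conv_rhs => rw [Finset.sum_comm]
          conv_lhs => rw [Finset.sum_comm]
          refine Finset.sum_congr rfl fun l _ => ?_
          conv_lhs => rw [Finset.sum_comm]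
          refine Finset.sum_congr rfl fun k _ => ?_
          refine Finset.sum_congr rfl fun i _ => ?_
          ring
        have lhs_re : (∑ i ∈ S, (c i : ℂ) * (∑ k, (x k : ℂ) * z i k) *
            (starRingEnd ℂ) (∑ k, (x k : ℂ) * z i k)).re
            = ∑ i ∈ S, c i * Complex.normSq (∑ k, (x k : ℂ) * z i k) := by
          rw [Complex.re_sum]
          refine Finset.sum_congr rfl fun i _ => ?_
          rw [mul_assoc, Complex.mul_conj, ← Complex.ofReal_mul, Complex.ofReal_re]
        rw [← lhs_re, key]
        simp only [dotProduct, Matrix.mulVec, Complex.re_sum]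
        rw [Finset.mul_sum]
        refine Finset.sum_congr rfl fun k _ => ?_
        rw [Finset.mul_sum, Finset.mul_sum]
        refine Finset.sum_congr rfl fun l _ => ?_
        rw [hM]
        rw [show ((x k : ℂ)) * ((x l : ℂ)) * (∑ i ∈ S, (c i : ℂ) * z i k *
          (starRingEnd ℂ) (z i l)) = ((x k * x l : ℝ) : ℂ) * (∑ i ∈ S, (c i : ℂ) * z i k *
          (starRingEnd ℂ) (z i l)) by push_cast; ring]
        rw [Complex.re_ofReal_mul]
        ring
      rw [hq]
      have : 0 ≤ ∑ i ∈ S, c i * Complex.normSq (∑ k, (x k : ℂ) * z i k) :=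
        Finset.sum_nonneg fun i hi => mul_nonneg (hc i hi) (Complex.normSq_nonneg _)
      linarith
  · constructor
    · intro h0 i hi m
      have hmm : (0:ℝ) = 4 * ∑ j ∈ S, c j * Complex.normSq (z j m) := by
        rw [← hdiag m, h0]; rfl
      have hsum : ∑ j ∈ S, c j * Complex.normSq (z j m) = 0 := by linarith
      have hterm := (Finset.sum_eq_zero_iff_of_nonneg
        (fun j hj => mul_nonneg (hc j hj) (Complex.normSq_nonneg _))).mp hsum i hi
      rcases mul_eq_zero.mp hterm with h | h
      · exact Or.inl h
      · exact Or.inr (Complex.normSq_eq_zero.mp h)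
    · intro h
      ext k l
      rw [hM]
      have : ∑ i ∈ S, (c i : ℂ) * z i k * (starRingEnd ℂ) (z i l) = 0 := by
        refine Finset.sum_eq_zero fun i hi => ?_
        rcases h i hi k with hc0 | hz0
        · rw [hc0]; simp
        · rw [hz0]; simp
      rw [this]
      simp

lemma inn_deriv_orth {d n : ℕ} (w : Fin d → (Fin n → ℝ) → (Fin d → ℂ))
    (wd : Fin d → Fin n → (Fin n → ℝ) → (Fin d → ℂ))
    (horth : ∀ θ (i j : Fin d), inn (w i θ) (w j θ) = if i = j then 1 else 0)
    (hwd : ∀ (i : Fin d) (k : Fin n) θ,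
      HasDerivAt (fun t => w i (Function.update θ k t)) (wd i k θ) (θ k))
    (θ : Fin n → ℝ) (m : Fin n) (j k : Fin d) :
    inn (wd j m θ) (w k θ) + inn (w j θ) (wd k m θ) = 0 := by
  have h1 : HasDerivAt
      (fun t => inn (w j (Function.update θ m t)) (w k (Function.update θ m t)))
      (inn (wd j m θ) (w k θ) + inn (w j θ) (wd k m θ)) (θ m) := by
    have : HasDerivAt
        (fun t => ∑ i, (starRingEnd ℂ) (w j (Function.update θ m t) i) *
          w k (Function.update θ m t) i)
        (∑ i, ((starRingEnd ℂ) (wd j m θ i) * w k (Function.update θ m (θ m)) i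
          + (starRingEnd ℂ) (w j (Function.update θ m (θ m)) i) * wd k m θ i)) (θ m) := by
      refine HasDerivAt.fun_sum fun i _ => ?_
      have ha := (hasDerivAt_pi.mp (hwd j m θ)) i
      have hb := (hasDerivAt_pi.mp (hwd k m θ)) i
      have has : HasDerivAt (fun t => (starRingEnd ℂ) (w j (Function.update θ m t) i))
          ((starRingEnd ℂ) (wd j m θ i)) (θ m) := by
        simpa only [starRingEnd_apply] using ha.star
      exact has.mul hb
    simp only [Function.update_eq_self] at this
    rw [Finset.sum_add_distrib] at this
    exact this
  have h2 : HasDerivAt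
      (fun t => inn (w j (Function.update θ m t)) (w k (Function.update θ m t)))
      (0 : ℂ) (θ m) := by
    have he : (fun t => inn (w j (Function.update θ m t)) (w k (Function.update θ m t)))
        = fun _ : ℝ => (if j = k then (1:ℂ) else 0) := funext fun t => horth _ j k
    rw [he]
    exact hasDerivAt_const _ _
  exact h1.unique h2

/-- **Ordering of the three quantum informations** `H(θ) ≤ C_L(θ) ≤ C_Υ(θ)` in the
Loewner order, with the stated equality characterizations. -/
theorem ordering_H_CL_CUpsilon {d n : ℕ} (hd : 1 ≤ d) (hn : 1 ≤ n)
    (p : Fin d → (Fin n → ℝ) → ℝ) (w : Fin d → (Fin n → ℝ) → (Fin d → ℂ))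
    (pd : Fin d → Fin n → (Fin n → ℝ) → ℝ)
    (wd : Fin d → Fin n → (Fin n → ℝ) → (Fin d → ℂ))
    (horth : ∀ θ (i j : Fin d), inn (w i θ) (w j θ) = if i = j then 1 else 0)
    (hpnn : ∀ (i : Fin d) θ, 0 ≤ p i θ) (hpsum : ∀ θ, ∑ i, p i θ = 1)
    (hpd : ∀ (i : Fin d) (k : Fin n) θ,
      HasDerivAt (fun t => p i (Function.update θ k t)) (pd i k θ) (θ k))
    (hwd : ∀ (i : Fin d) (k : Fin n) θ,
      HasDerivAt (fun t => w i (Function.update θ k t)) (wd i k θ) (θ k))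
    (hpdC : ∀ i : Fin d, Continuous fun θ k => pd i k θ)
    (hwdC : ∀ i : Fin d, Continuous fun θ k => wd i k θ)
    (hdich : ∀ i : Fin d, (∀ θ, 0 < p i θ) ∨ (∀ θ, p i θ = 0))
    (C CL H : (Fin n → ℝ) → Matrix (Fin n) (Fin n) ℝ)
    (hC : ∀ θ (k l : Fin n), C θ k l =
        (∑ i, if 0 < p i θ then pd i k θ * pd i l θ / p i θ else 0)
        + 4 * (∑ i, ∑ j, if i < j ∧ 0 < p i θ + p j θ then
            ((p i θ + p j θ : ℝ) : ℂ) * inn (wd i k θ) (w j θ) * inn (w j θ) (wd i l θ)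
            else 0).re
        + 4 * (∑ i, if 0 < p i θ then
            ((p i θ : ℝ) : ℂ) * inn (wd i k θ) (w i θ) * inn (w i θ) (wd i l θ)
            else 0).re)
    (hCL : ∀ θ (k l : Fin n), CL θ k l =
        (∑ i, if 0 < p i θ then pd i k θ * pd i l θ / p i θ else 0)
        + 4 * (∑ i, ∑ j, if i < j ∧ 0 < p i θ + p j θ then
            ((p i θ + p j θ : ℝ) : ℂ) * inn (wd i k θ) (w j θ) * inn (w j θ) (wd i l θ)
            else 0).re)
    (hH : ∀ θ (k l : Fin n), H θ k l =
        (∑ i, if 0 < p i θ then pd i k θ * pd i l θ / p i θ else 0)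
        + 4 * (∑ i, ∑ j, if i < j ∧ 0 < p i θ + p j θ then
            (((p i θ - p j θ) ^ 2 / (p i θ + p j θ) : ℝ) : ℂ) *
              inn (wd i k θ) (w j θ) * inn (w j θ) (wd i l θ) else 0).re) :
    ∀ θ : Fin n → ℝ,
      (CL θ - H θ).PosSemidef ∧
      (C θ - CL θ).PosSemidef ∧
      (H θ = CL θ ↔ ∀ (m : Fin n) (j k : Fin d), j ≠ k →
        0 < p j θ → 0 < p k θ → inn (wd j m θ) (w k θ) = 0) ∧
      (CL θ = C θ ↔ ∀ (m : Fin n) (i : Fin d),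
        0 < p i θ → inn (wd i m θ) (w i θ) = 0) := by
  intro θ
  classical
  -- pair setup for CL - H
  set Sp : Finset (Fin d × Fin d) :=
    Finset.univ.filter (fun q : Fin d × Fin d => q.1 < q.2 ∧ 0 < p q.1 θ + p q.2 θ) with hSp
  set cp : Fin d × Fin d → ℝ := fun q =>
    (p q.1 θ + p q.2 θ) - (p q.1 θ - p q.2 θ) ^ 2 / (p q.1 θ + p q.2 θ) with hcpdef
  set zp : Fin d × Fin d → Fin n → ℂ := fun q k => inn (wd q.1 k θ) (w q.2 θ) with hzpdef
  have hcp : ∀ q ∈ Sp, 0 ≤ cp q := by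
    intro q hq
    obtain ⟨-, hlt, hab⟩ := Finset.mem_filter.mp hq
    have h1 := hpnn q.1 θ
    have h2 := hpnn q.2 θ
    rw [hcpdef]
    dsimp only
    rw [sub_nonneg, div_le_iff₀ hab]
    nlinarith
  have hMp : ∀ k l, (CL θ - H θ) k l
      = 4 * (∑ q ∈ Sp, (cp q : ℂ) * zp q k * (starRingEnd ℂ) (zp q l)).re := by
    intro k l
    have hAB : (∑ q ∈ Sp, (cp q : ℂ) * zp q k * (starRingEnd ℂ) (zp q l))
        = (∑ i, ∑ j, if i < j ∧ 0 < p i θ + p j θ then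
            ((p i θ + p j θ : ℝ) : ℂ) * inn (wd i k θ) (w j θ) * inn (w j θ) (wd i l θ)
            else 0)
          - (∑ i, ∑ j, if i < j ∧ 0 < p i θ + p j θ then
            (((p i θ - p j θ) ^ 2 / (p i θ + p j θ) : ℝ) : ℂ) *
              inn (wd i k θ) (w j θ) * inn (w j θ) (wd i l θ) else 0) := by
      rw [hSp, Finset.sum_filter, Fintype.sum_prod_type, ← Finset.sum_sub_distrib]
      refine Finset.sum_congr rfl fun i _ => ?_
      rw [← Finset.sum_sub_distrib]
      refine Finset.sum_congr rfl fun j _ => ?_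
      by_cases hcond : i < j ∧ 0 < p i θ + p j θ
      · rw [if_pos hcond, if_pos hcond, if_pos hcond]
        rw [hcpdef, hzpdef]
        dsimp only
        rw [inn_comm (wd i l θ) (w j θ)]
        push_cast
        ring
      · rw [if_neg hcond, if_neg hcond, if_neg hcond, sub_zero]
    rw [Matrix.sub_apply, hCL θ k l, hH θ k l, hAB, Complex.sub_re]
    ring
  obtain ⟨hpsd1, hzero1⟩ := psd_key Sp cp zp hcp (CL θ - H θ) hMp
  -- single setup for C - CL
  set Ss : Finset (Fin d) := Finset.univ.filter (fun i => 0 < p i θ) with hSs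
  set cs : Fin d → ℝ := fun i => p i θ with hcsdef
  set zs : Fin d → Fin n → ℂ := fun i k => inn (wd i k θ) (w i θ) with hzsdef
  have hcs : ∀ i ∈ Ss, 0 ≤ cs i := fun i _ => hpnn i θ
  have hMs : ∀ k l, (C θ - CL θ) k l
      = 4 * (∑ i ∈ Ss, (cs i : ℂ) * zs i k * (starRingEnd ℂ) (zs i l)).re := by
    intro k l
    have hAB : (∑ i ∈ Ss, (cs i : ℂ) * zs i k * (starRingEnd ℂ) (zs i l))
        = ∑ i, if 0 < p i θ then
            ((p i θ : ℝ) : ℂ) * inn (wd i k θ) (w i θ) * inn (w i θ) (wd i l θ) else 0 := by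
      rw [hSs, Finset.sum_filter]
      refine Finset.sum_congr rfl fun i _ => ?_
      by_cases hcond : 0 < p i θ
      · rw [if_pos hcond, if_pos hcond, hcsdef, hzsdef]
        dsimp only
        rw [inn_comm (wd i l θ) (w i θ)]
      · rw [if_neg hcond, if_neg hcond]
    rw [Matrix.sub_apply, hC θ k l, hCL θ k l, hAB]
    ring
  obtain ⟨hpsd2, hzero2⟩ := psd_key Ss cs zs hcs (C θ - CL θ) hMs
  refine ⟨hpsd1, hpsd2, ?_, ?_⟩
  · constructor
    · intro hEq m j k hjk hpj hpk
      have h0 : CL θ - H θ = 0 := sub_eq_zero_of_eq hEq.symm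
      have hall := hzero1.mp h0
      rcases lt_or_gt_of_ne hjk with hlt | hgt
      · have hq : (j, k) ∈ Sp := Finset.mem_filter.mpr
          ⟨Finset.mem_univ _, hlt, by dsimp only; linarith⟩
        rcases hall (j, k) hq m with hc0 | hz0
        · exfalso
          rw [hcpdef] at hc0
          dsimp only at hc0
          rw [sub_eq_zero] at hc0
          have hab : (0:ℝ) < p j θ + p k θ := by linarith
          rw [eq_div_iff hab.ne'] at hc0
          nlinarith
        · exact hz0
      · have hq : (k, j) ∈ Sp := Finset.mem_filter.mpr
          ⟨Finset.mem_univ _, hgt, by dsimp only; linarith⟩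
        rcases hall (k, j) hq m with hc0 | hz0
        · exfalso
          rw [hcpdef] at hc0
          dsimp only at hc0
          rw [sub_eq_zero] at hc0
          have hab : (0:ℝ) < p k θ + p j θ := by linarith
          rw [eq_div_iff hab.ne'] at hc0
          nlinarith
        · have hz : inn (wd k m θ) (w j θ) = 0 := hz0
          have hrel := inn_deriv_orth w wd horth hwd θ m j k
          rw [inn_comm (wd k m θ) (w j θ), hz] at hrel
          simpa using hrel
    · intro hv
      have h0 : CL θ - H θ = 0 := by
        refine hzero1.mpr fun q hq m => ?_
        obtain ⟨-, hlt, hab⟩ := Finset.mem_filter.mp hq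
        by_cases h1 : 0 < p q.1 θ
        · by_cases h2 : 0 < p q.2 θ
          · exact Or.inr (hv m q.1 q.2 (ne_of_lt hlt) h1 h2)
          · left
            have hb : p q.2 θ = 0 := le_antisymm (not_lt.mp h2) (hpnn q.2 θ)
            rw [hcpdef]
            dsimp only
            rw [hb, add_zero, sub_zero, sq, mul_div_assoc, div_self h1.ne', mul_one, sub_self]
        · left
          have ha : p q.1 θ = 0 := le_antisymm (not_lt.mp h1) (hpnn q.1 θ)
          have h2 : 0 < p q.2 θ := by
            rcases (hpnn q.2 θ).lt_or_eq with h | h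
            · exact h
            · exfalso; rw [ha, ← h] at hab; simp at hab
          rw [hcpdef]
          dsimp only
          rw [ha, zero_add, zero_sub, neg_sq, sq, mul_div_assoc, div_self h2.ne', mul_one,
            sub_self]
      exact (sub_eq_zero.mp h0).symm
  · constructor
    · intro hEq m i hpi
      have h0 : C θ - CL θ = 0 := sub_eq_zero_of_eq hEq.symm
      have hi : i ∈ Ss := Finset.mem_filter.mpr ⟨Finset.mem_univ _, hpi⟩
      rcases hzero2.mp h0 i hi m with hc0 | hz0
      · exact absurd hc0 hpi.ne'
      · exact hz0
    · intro hv
      have h0 : C θ - CL θ = 0 := by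
        refine hzero2.mpr fun i hi m => Or.inr ?_
        exact hv m i (Finset.mem_filter.mp hi).2
      exact (sub_eq_zero.mp h0).symm
end
end

section
/- Real Gram matrices force complex linear independence (Lemma): Let x_1,…,x_n ∈ ℂ^d be vectors that are linearly independent over ℝ (viewing ℂ^d as a real vector space) and suppose ⟨x_j, x_k⟩ ∈ ℝ for all j,k ∈ {1,…,n}. Then x_1,…,x_n are linearly independent over ℂ; in particular n ≤ d. -/
open scoped BigOperators

noncomputable section

lemma inn_sum_right {d n : ℕ} (y : Fin d → ℂ) (c : Fin n → ℂ) (x : Fin n → (Fin d → ℂ)) :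
    inn y (∑ j, c j • x j) = ∑ j, c j * inn y (x j) := by
  simp only [inn, Finset.sum_apply, Pi.smul_apply, smul_eq_mul, Finset.mul_sum]
  rw [Finset.sum_comm]
  refine Finset.sum_congr rfl fun j _ => Finset.sum_congr rfl fun i _ => by ring

lemma inn_sum_left {d n : ℕ} (y : Fin d → ℂ) (c : Fin n → ℂ) (x : Fin n → (Fin d → ℂ)) :
    inn (∑ j, c j • x j) y = ∑ j, (starRingEnd ℂ) (c j) * inn (x j) y := by
  simp only [inn, Finset.sum_apply, Pi.smul_apply, smul_eq_mul, map_sum, map_mul,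
    Finset.sum_mul, Finset.mul_sum]
  rw [Finset.sum_comm]
  refine Finset.sum_congr rfl fun j _ => Finset.sum_congr rfl fun i _ => by ring

lemma inn_self_eq_zero {d : ℕ} {u : Fin d → ℂ} (h : inn u u = 0) : u = 0 := by
  have h' : ∑ i, Complex.normSq (u i) = 0 := by
    have := congrArg Complex.re h
    simpa [inn, Complex.normSq_eq_conj_mul_self, Complex.re_sum, Complex.normSq_apply] using this
  have := (Finset.sum_eq_zero_iff_of_nonneg (fun i _ => Complex.normSq_nonneg (u i))).mp h'
  funext i
  exact Complex.normSq_eq_zero.mp (this i (Finset.mem_univ i))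

/-- **Real Gram matrices force complex linear independence.**
If `x_1, …, x_n ∈ ℂ^d` are `ℝ`-linearly independent and all their pairwise Hermitian
inner products are real, then they are `ℂ`-linearly independent; in particular `n ≤ d`. -/
theorem real_gram_complex_independent {d n : ℕ} (x : Fin n → (Fin d → ℂ))
    (hR : LinearIndependent ℝ x)
    (hreal : ∀ j k, (inn (x j) (x k)).im = 0) :
    LinearIndependent ℂ x ∧ n ≤ d := by
  have hRind := Fintype.linearIndependent_iff.mp hR
  have key : LinearIndependent ℂ x := by
    rw [Fintype.linearIndependent_iff]
    intro g hg j
    set a : Fin n → ℝ := fun j => (g j).re with ha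
    set b : Fin n → ℝ := fun j => (g j).im with hb
    set u : Fin d → ℂ := ∑ j, ((a j : ℂ)) • x j with hu
    set v : Fin d → ℂ := ∑ j, ((b j : ℂ)) • x j with hv
    have huv : u + Complex.I • v = 0 := by
      rw [hu, hv, Finset.smul_sum, ← Finset.sum_add_distrib, ← hg]
      congr 1; ext k i
      simp only [Pi.add_apply, Pi.smul_apply, smul_eq_mul]
      rw [show (g k) = (a k : ℂ) + (b k : ℂ) * Complex.I from (Complex.re_add_im (g k)).symm]
      ring
    have hinnu : ∀ k, (inn (x k) u).im = 0 := by
      intro k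
      rw [hu, inn_sum_right, Complex.im_sum]
      apply Finset.sum_eq_zero
      intro j _
      simp [Complex.mul_im, hreal k j]
    have hinnv : ∀ k, (inn (x k) v).im = 0 := by
      intro k
      rw [hv, inn_sum_right, Complex.im_sum]
      apply Finset.sum_eq_zero
      intro j _
      simp [Complex.mul_im, hreal k j]
    have hzero : ∀ k, inn (x k) u = 0 ∧ inn (x k) v = 0 := by
      intro k
      have hexp : inn (x k) (u + Complex.I • v) = inn (x k) u + Complex.I * inn (x k) v := by
        simp only [inn, Pi.add_apply, Pi.smul_apply, smul_eq_mul, mul_add,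
          Finset.sum_add_distrib, Finset.mul_sum]
        congr 1
        exact Finset.sum_congr rfl fun i _ => by ring
      have h1 : inn (x k) u + Complex.I * inn (x k) v = 0 := by
        rw [← hexp, huv]; simp [inn]
      have hre := congrArg Complex.re h1
      have him := congrArg Complex.im h1
      simp [Complex.add_re, Complex.add_im, Complex.mul_re, Complex.mul_im,
        hinnu k, hinnv k] at hre him
      constructor <;> apply Complex.ext <;> simp [hinnu k, hinnv k, hre, him]
    have hu0 : u = 0 := by
      apply inn_self_eq_zero
      rw [show inn u u = inn (∑ j, ((a j : ℂ)) • x j) u from by rw [← hu]]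
      rw [inn_sum_left]
      exact Finset.sum_eq_zero fun k _ => by rw [(hzero k).1, mul_zero]
    have hv0 : v = 0 := by
      apply inn_self_eq_zero
      rw [show inn v v = inn (∑ j, ((b j : ℂ)) • x j) v from by rw [← hv]]
      rw [inn_sum_left]
      exact Finset.sum_eq_zero fun k _ => by rw [(hzero k).2, mul_zero]
    have ha0 : ∀ j, a j = 0 := by
      apply hRind
      have heq : ∑ j, a j • x j = u := by
        rw [hu]
        exact Finset.sum_congr rfl fun k _ => funext fun i => by
          simp [Complex.real_smul]
      rw [heq, hu0]
    have hb0 : ∀ j, b j = 0 := by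
      apply hRind
      have heq : ∑ j, b j • x j = v := by
        rw [hv]
        exact Finset.sum_congr rfl fun k _ => funext fun i => by
          simp [Complex.real_smul]
      rw [heq, hv0]
    exact Complex.ext (ha0 j) (hb0 j)
  refine ⟨key, ?_⟩
  have := key.fintype_card_le_finrank
  simpa using this
end
end

section
/- Angular error bound for estimating a phase from perturbed cosine and sine (Theorem): Let α ∈ ℝ with 0 < α ≤ 1/2, and let x, y, x₀, y₀ ∈ ℝ satisfy x² + y² = 1, |x − x₀| ≤ α and |y − y₀| ≤ α. Then (x₀, y₀) ≠ (0, 0), and the circular distance between the arguments satisfies |arg(x + iy) − arg(x₀ + iy₀)|_{2π} ≤ arcsin(α) + arcsin(α/(1 − α)), where |a − b|_{2π} denotes the distance between a and b modulo 2π, i.e. min over integers k of |a − b − 2πk|. -/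
open scoped BigOperators

noncomputable section

/-- Circular distance: the distance between `a` and `b` modulo `2π`, i.e. the infimum
over integers `k` of `|a − b − 2πk|`. -/
def circDist (a b : ℝ) : ℝ := ⨅ k : ℤ, |a - b - 2 * Real.pi * k|

lemma circDist_le_abs (a b r : ℝ) (k : ℤ) (h : a - b - 2 * Real.pi * k = r) :
    circDist a b ≤ |r| := by
  rw [← h]
  exact ciInf_le ⟨0, by rintro _ ⟨k, rfl⟩; positivity⟩ k

lemma abs_arg_le_arcsin {u : ℂ} {t : ℝ} (hu : u ≠ 0) (hre : 0 ≤ u.re)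
    (him : |u.im| ≤ t * ‖u‖) : |u.arg| ≤ Real.arcsin t := by
  have h2 : |u.arg| ≤ Real.pi / 2 := Complex.abs_arg_le_pi_div_two_iff.2 hre
  obtain ⟨h2a, h2b⟩ := abs_le.1 h2
  have habs : 0 < ‖u‖ := norm_pos_iff.mpr hu
  have hpi := Real.pi_pos
  have hs : |Real.sin u.arg| = |u.im| / ‖u‖ := by
    rw [Complex.sin_arg, abs_div, abs_of_nonneg habs.le]
  have key : |u.arg| = Real.arcsin (|u.im| / ‖u‖) := by
    rw [← hs]
    rcases le_or_gt 0 u.arg with h | h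
    · rw [abs_of_nonneg h,
        abs_of_nonneg (Real.sin_nonneg_of_nonneg_of_le_pi h (by linarith)),
        Real.arcsin_sin h2a h2b]
    · rw [abs_of_neg h,
        abs_of_neg (Real.sin_neg_of_neg_of_neg_pi_lt h (by linarith)),
        ← Real.sin_neg, Real.arcsin_sin (by linarith) (by linarith)]
  rw [key]
  exact Real.monotone_arcsin ((div_le_iff₀ habs).2 (by linarith [him]))

lemma re_key (α x y x₀ y₀ : ℝ) (hα0 : 0 < α) (hα : α ≤ 1 / 2)
    (hxy : x ^ 2 + y ^ 2 = 1) (hx : |x - x₀| ≤ α) (hy : |y - y₀| ≤ α) :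
    0 ≤ x * x₀ + y₀ ^ 2 := by
  have hxx : x * (x - x₀) ≤ α * |x| := by
    calc x * (x - x₀) ≤ |x * (x - x₀)| := le_abs_self _
    _ = |x| * |x - x₀| := abs_mul _ _
    _ ≤ |x| * α := mul_le_mul_of_nonneg_left hx (abs_nonneg x)
    _ = α * |x| := mul_comm _ _
  rcases le_or_gt α |x| with h | h
  · nlinarith [sq_abs x, sq_nonneg y₀, abs_nonneg x]
  · have hyb : α ≤ |y| := by nlinarith [sq_abs x, sq_abs y, abs_nonneg y, abs_nonneg x]
    have hyy : y * (y - y₀) ≤ |y| * |y - y₀| := by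
      calc y * (y - y₀) ≤ |y * (y - y₀)| := le_abs_self _
      _ = |y| * |y - y₀| := abs_mul _ _
    have key : y ^ 2 - 2 * α * |y| + α ^ 2 ≤ y₀ ^ 2 := by
      nlinarith [mul_nonneg (sub_nonneg.2 hy) (sub_nonneg.2 hyb),
        sq_nonneg (α - |y - y₀|), sq_abs (y - y₀)]
    have s5 : (|x| + 2 * |y|) ^ 2 ≤ 5 := by
      nlinarith [sq_nonneg (2 * |x| - |y|), sq_abs x, sq_abs y]
    have step2 : α * (|x| + 2 * |y|) ≤ 1 + α ^ 2 := by
      nlinarith [s5, sq_nonneg (1 - α ^ 2 - α), abs_nonneg x, abs_nonneg y,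
        mul_nonneg (sq_nonneg α) (sub_nonneg.2 s5)]
    nlinarith [hxx, key, step2, sq_abs x, sq_abs y]

set_option maxHeartbeats 1000000 in
/-- **Angular error bound for estimating a phase from perturbed cosine and sine.**
If `(x, y)` lies on the unit circle and `(x₀, y₀)` approximates it to within `α ≤ 1/2`
in each coordinate, then `(x₀, y₀) ≠ (0, 0)` and the circular distance between the
arguments is at most `arcsin α + arcsin (α/(1 − α))`. -/
theorem angular_error_bound (α x y x₀ y₀ : ℝ) (hα0 : 0 < α) (hα : α ≤ 1 / 2)
    (hxy : x ^ 2 + y ^ 2 = 1) (hx : |x - x₀| ≤ α) (hy : |y - y₀| ≤ α) :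
    ¬(x₀ = 0 ∧ y₀ = 0) ∧
    circDist (Complex.arg ((x : ℂ) + (y : ℂ) * Complex.I))
        (Complex.arg ((x₀ : ℂ) + (y₀ : ℂ) * Complex.I))
      ≤ Real.arcsin α + Real.arcsin (α / (1 - α)) := by
  obtain ⟨hx1, hx2⟩ := abs_le.1 hx
  obtain ⟨hy1, hy2⟩ := abs_le.1 hy
  have hne : ¬(x₀ = 0 ∧ y₀ = 0) := by
    rintro ⟨rfl, rfl⟩
    nlinarith
  refine ⟨hne, ?_⟩
  set z : ℂ := (x : ℂ) + (y : ℂ) * Complex.I with hz_def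
  set w : ℂ := (x : ℂ) + (y₀ : ℂ) * Complex.I with hw_def
  set z₀ : ℂ := (x₀ : ℂ) + (y₀ : ℂ) * Complex.I with hz0_def
  have hzre : z.re = x := by simp [hz_def]
  have hzim : z.im = y := by simp [hz_def]
  have hwre : w.re = x := by simp [hw_def]
  have hwim : w.im = y₀ := by simp [hw_def]
  have hz0re : z₀.re = x₀ := by simp [hz0_def]
  have hz0im : z₀.im = y₀ := by simp [hz0_def]
  -- abs z = 1
  have habsz : ‖z‖ = 1 := by
    rw [Complex.norm_def, Complex.normSq_apply, hzre, hzim,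
      show x * x + y * y = 1 by nlinarith]
    exact Real.sqrt_one
  have hzne : z ≠ 0 := by
    intro h; rw [h] at habsz; simp at habsz
  -- abs w ≥ 1 - α
  have hzw : ‖z - w‖ ≤ α := by
    have : z - w = ((y - y₀ : ℝ) : ℂ) * Complex.I := by
      rw [hz_def, hw_def]; push_cast; ring
    rw [this, norm_mul, Complex.norm_I, Complex.norm_real, Real.norm_eq_abs, mul_one]
    exact hy
  have habsw : 1 - α ≤ ‖w‖ := by
    have h := (abs_le.1 (abs_norm_sub_norm_le z w)).2
    linarith [h, hzw, habsz.ge, habsz.le]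
  have hwne : w ≠ 0 := by
    intro h
    rw [h, norm_zero] at habsw
    linarith
  have hz0ne : z₀ ≠ 0 := by
    intro h
    exact hne ⟨by rw [← hz0re, h]; rfl, by rw [← hz0im, h]; rfl⟩
  -- the two intermediate complex numbers
  set u₁ : ℂ := z * (starRingEnd ℂ) w with hu1_def
  set u₂ : ℂ := w * (starRingEnd ℂ) z₀ with hu2_def
  have hu1ne : u₁ ≠ 0 := mul_ne_zero hzne (by simpa using hwne)
  have hu2ne : u₂ ≠ 0 := mul_ne_zero hwne (by simpa using hz0ne)
  have hu1re : u₁.re = x * x + y * y₀ := by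
    rw [hu1_def, Complex.mul_re, Complex.conj_re, Complex.conj_im, hzre, hzim, hwre, hwim]
    ring
  have hu1im : u₁.im = x * (y - y₀) := by
    rw [hu1_def, Complex.mul_im, Complex.conj_re, Complex.conj_im, hzre, hzim, hwre, hwim]
    ring
  have hu2re : u₂.re = x * x₀ + y₀ ^ 2 := by
    rw [hu2_def, Complex.mul_re, Complex.conj_re, Complex.conj_im, hwre, hwim, hz0re, hz0im]
    ring
  have hu2im : u₂.im = y₀ * (x₀ - x) := by
    rw [hu2_def, Complex.mul_im, Complex.conj_re, Complex.conj_im, hwre, hwim, hz0re, hz0im]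
    ring
  have habsu1 : ‖u₁‖ = ‖w‖ := by
    rw [hu1_def, norm_mul, Complex.norm_conj, habsz, one_mul]
  have habsu2 : ‖u₂‖ = ‖w‖ * ‖z₀‖ := by
    rw [hu2_def, norm_mul, Complex.norm_conj]
  -- bound |arg u₁| ≤ arcsin α
  have hb1 : |u₁.arg| ≤ Real.arcsin α := by
    apply abs_arg_le_arcsin hu1ne
    · rw [hu1re]
      have hya : |y| ≤ 1 := by nlinarith [sq_abs y, abs_nonneg y, sq_nonneg x]
      have : y * (y - y₀) ≤ |y| * |y - y₀| := by
        calc y * (y - y₀) ≤ |y * (y - y₀)| := le_abs_self _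
        _ = |y| * |y - y₀| := abs_mul _ _
      nlinarith [abs_nonneg y, mul_le_mul_of_nonneg_left hy (abs_nonneg y)]
    · rw [hu1im, habsu1, abs_mul]
      calc |x| * |y - y₀| ≤ |x| * α := mul_le_mul_of_nonneg_left hy (abs_nonneg x)
      _ ≤ ‖w‖ * α := by
          have h : |x| ≤ ‖w‖ := by
            rw [← hwre]; exact Complex.abs_re_le_norm w
          exact mul_le_mul_of_nonneg_right h hα0.le
      _ = α * ‖w‖ := mul_comm _ _
  -- bound |arg u₂| ≤ arcsin (α / (1 - α))
  have h1α : (0 : ℝ) < 1 - α := by linarith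
  have hb2 : |u₂.arg| ≤ Real.arcsin (α / (1 - α)) := by
    apply abs_arg_le_arcsin hu2ne
    · rw [hu2re]
      exact re_key α x y x₀ y₀ hα0 hα hxy hx hy
    · rw [hu2im, habsu2, abs_mul]
      have hy0 : |y₀| ≤ ‖z₀‖ := by
        rw [← hz0im]; exact Complex.abs_im_le_norm z₀
      have hx0 : |x₀ - x| ≤ α := by rw [abs_sub_comm]; exact hx
      have hstep : |y₀| * |x₀ - x| ≤ α * ‖z₀‖ := by
        calc |y₀| * |x₀ - x| ≤ |y₀| * α := mul_le_mul_of_nonneg_left hx0 (abs_nonneg y₀)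
        _ ≤ ‖z₀‖ * α := mul_le_mul_of_nonneg_right hy0 hα0.le
        _ = α * ‖z₀‖ := mul_comm _ _
      have habsz0 : 0 ≤ ‖z₀‖ := norm_nonneg z₀
      calc |y₀| * |x₀ - x| ≤ α * ‖z₀‖ := hstep
      _ ≤ α / (1 - α) * (‖w‖ * ‖z₀‖) := by
          rw [div_mul_eq_mul_div, le_div_iff₀ h1α]
          nlinarith [mul_le_mul_of_nonneg_left habsw (mul_nonneg hα0.le habsz0)]
  -- angle congruence
  have hangle : ((z.arg - z₀.arg : ℝ) : Real.Angle) = ((u₁.arg + u₂.arg : ℝ) : Real.Angle) := by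
    have e1 : ((u₁.arg : ℝ) : Real.Angle) = (z.arg : Real.Angle) - (w.arg : Real.Angle) := by
      rw [hu1_def, Complex.arg_mul_coe_angle hzne (by simpa using hwne),
        Complex.arg_conj_coe_angle, sub_eq_add_neg]
    have e2 : ((u₂.arg : ℝ) : Real.Angle) = (w.arg : Real.Angle) - (z₀.arg : Real.Angle) := by
      rw [hu2_def, Complex.arg_mul_coe_angle hwne (by simpa using hz0ne),
        Complex.arg_conj_coe_angle, sub_eq_add_neg]
    rw [Real.Angle.coe_sub, Real.Angle.coe_add, e1, e2]
    abel
  obtain ⟨k, hk⟩ := Real.Angle.angle_eq_iff_two_pi_dvd_sub.1 hangle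
  have hfin : circDist z.arg z₀.arg ≤ |u₁.arg + u₂.arg| := by
    apply circDist_le_abs _ _ _ k
    linarith [hk]
  calc circDist z.arg z₀.arg ≤ |u₁.arg + u₂.arg| := hfin
  _ ≤ |u₁.arg| + |u₂.arg| := abs_add_le _ _
  _ ≤ Real.arcsin α + Real.arcsin (α / (1 - α)) := add_le_add hb1 hb2
end
end
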